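/- As a consequence of the structure theorem, the optimal value ℓ* for a single multi-component perimeter equals len(S_{k−k'})/t for some indices 1 ≤ k, k' ≤ q and some integer 1 ≤ t ≤ n, where S_{k−k'} denotes the closed arc from the left endpoint of S_k clockwise to the right endpoint of S_{k'} (including intermediate gaps). -/

import Mathlib

/-- A closed arc on the circle of circumference `T`. -/
def carc (T : ℝ) (a b : ℝ) : Set (AddCircle T) :=
  (fun x : ℝ => (x : AddCircle T)) '' Set.Icc a b

section OptCandAux
open Set

theorem subdiv_cover (α β : ℝ) (t : ℕ) (ht : 0 < t) (x : ℝ) (h1 : α ≤ x) (h2 : x ≤ β) :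
    ∃ r : ℕ, r < t ∧ α + r * ((β - α)/t) ≤ x ∧ x ≤ α + (r+1) * ((β - α)/t) := by
  set δ := (β - α)/t with hδ
  have htR : (0:ℝ) < t := by exact_mod_cast ht
  have hδ0 : 0 ≤ δ := div_nonneg (by linarith) htR.le
  have hβ : β = α + t * δ := by
    have : (t:ℝ) * δ = β - α := by rw [hδ]; field_simp
    linarith
  rcases eq_or_lt_of_le hδ0 with h0 | hpos
  · refine ⟨0, ht, by simpa using h1, ?_⟩
    have : β = α := by rw [hβ, ← h0]; ring
    push_cast; nlinarith [h2, this]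
  · have hfi : ((x - α)/δ) * δ = x - α := by field_simp
    rcases le_or_gt (Nat.floor ((x - α)/δ)) (t - 1) with hle | hgt
    · refine ⟨Nat.floor ((x - α)/δ), by omega, ?_, ?_⟩
      · have := Nat.floor_le (show (0:ℝ) ≤ (x - α)/δ from div_nonneg (by linarith) hpos.le)
        nlinarith
      · have := Nat.lt_floor_add_one ((x - α)/δ)
        push_cast; nlinarith
    · refine ⟨t - 1, by omega, ?_, ?_⟩
      · have h3 : ((t:ℝ) - 1) ≤ (Nat.floor ((x - α)/δ) : ℝ) := by
          have : ((t - 1 : ℕ) : ℝ) ≤ (Nat.floor ((x - α)/δ) : ℝ) := by exact_mod_cast hgt.le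
          push_cast [Nat.cast_sub ht] at this; linarith
        have h4 := Nat.floor_le (show (0:ℝ) ≤ (x - α)/δ from div_nonneg (by linarith) hpos.le)
        have ht1 : ((t - 1 : ℕ) : ℝ) = (t:ℝ) - 1 := by push_cast [Nat.cast_sub ht]; ring
        rw [ht1]; nlinarith
      · have ht1 : ((t - 1 : ℕ) : ℝ) = (t:ℝ) - 1 := by push_cast [Nat.cast_sub ht]; ring
        rw [ht1]; nlinarith

theorem len_le_sum' (α β : ℝ) {ι : Type*} (J : Finset ι) (A B : ι → ℝ)
    (hc : Icc α β ⊆ ⋃ j ∈ J, Icc (A j) (B j)) :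
    β - α ≤ ∑ j ∈ J, max (B j - A j) 0 := by
  have h1 : MeasureTheory.volume (Icc α β) ≤ ∑ j ∈ J, MeasureTheory.volume (Icc (A j) (B j)) :=
    le_trans (MeasureTheory.measure_mono hc) (MeasureTheory.measure_biUnion_finset_le J _)
  rw [Real.volume_Icc] at h1
  have h2 : ∀ j ∈ J, MeasureTheory.volume (Icc (A j) (B j)) = ENNReal.ofReal (max (B j - A j) 0) := by
    intro j _
    rw [Real.volume_Icc]
    rcases le_total (B j - A j) 0 with h | h
    · rw [max_eq_right h, ENNReal.ofReal_eq_zero.2 h, ENNReal.ofReal_zero]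
    · rw [max_eq_left h]
  rw [Finset.sum_congr rfl h2, ← ENNReal.ofReal_sum_of_nonneg (fun j _ => le_max_right _ _)] at h1
  exact (ENNReal.ofReal_le_ofReal_iff (Finset.sum_nonneg fun j _ => le_max_right _ _)).1 h1

inductive Blocks (q : ℕ) : ℕ → List (ℕ × ℕ × ℕ) → Prop
  | nil : Blocks q q []
  | cons {s e t L} : s ≤ e → e < q → Blocks q (e + 1) L → Blocks q s ((s, e, t) :: L)

theorem chain_mono' (q : ℕ) (P R : ℕ → ℝ)
    (hPR : ∀ i < q, P i ≤ R i) (hch : ∀ i, i + 1 < q → R i ≤ P (i + 1)) :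
    ∀ i i', i ≤ i' → i' < q → P i ≤ P i' ∧ R i ≤ R i' := by
  intro i i' hle hlt
  induction i' with
  | zero => interval_cases i; exact ⟨le_rfl, le_rfl⟩
  | succ m ih =>
    rcases Nat.lt_or_ge i (m+1) with h | h
    · have hm : m < q := by omega
      have := ih (by omega) hm
      have h1 : R m ≤ P (m+1) := hch m hlt
      have h2 : P (m+1) ≤ R (m+1) := hPR _ hlt
      have h3 : P m ≤ R m := hPR _ hm
      exact ⟨by linarith [this.1, this.2], by linarith [this.1, this.2]⟩
    · have : i = m + 1 := by omega
      subst this; exact ⟨le_rfl, le_rfl⟩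

theorem core {n : ℕ} (ℓ : ℝ) (q : ℕ) (P R : ℕ → ℝ)
    (hPR : ∀ i < q, P i ≤ R i) (hch : ∀ i, i + 1 < q → R i ≤ P (i + 1))
    (A C : Fin n → ℝ) (hC : ∀ j, 0 ≤ C j ∧ C j ≤ ℓ) :
    ∀ (fuel s : ℕ) (J : Finset (Fin n)), q - s ≤ fuel → s ≤ q →
      (∀ i, s ≤ i → i < q → ∀ x, P i ≤ x → x ≤ R i → ∃ j ∈ J, A j ≤ x ∧ x ≤ A j + C j) →
      ∃ L : List (ℕ × ℕ × ℕ), Blocks q s L ∧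
        (∀ b ∈ L, 1 ≤ b.2.2 ∧ R b.2.1 - P b.1 ≤ b.2.2 * ℓ) ∧
        (L.map (fun b => b.2.2)).sum ≤ J.card := by
  classical
  have mono := chain_mono' q P R hPR hch
  intro fuel
  induction fuel with
  | zero =>
    intro s J hfuel hsq _
    have : s = q := by omega
    subst this
    exact ⟨[], Blocks.nil, by simp, by simp⟩
  | succ f ih =>
    intro s J hfuel hsq hcov
    rcases Nat.eq_or_lt_of_le hsq with hsq' | hslt
    · subst hsq'; exact ⟨[], Blocks.nil, by simp, by simp⟩
    · have hex : ∃ g, (s ≤ g ∧ g < q) ∧ (g + 1 = q ∨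
          ∃ x, R g ≤ x ∧ x ≤ P (g+1) ∧ ∀ j ∈ J, ¬(A j ≤ x ∧ x ≤ A j + C j)) :=
        ⟨q - 1, ⟨by omega, by omega⟩, Or.inl (by omega)⟩
    
      obtain ⟨⟨hsg, hgq⟩, hgalt⟩ := Nat.find_spec hex
      set g₀ := Nat.find hex with hg₀
      have hmin : ∀ i, s ≤ i → i < g₀ →
          ¬ (∃ x, R i ≤ x ∧ x ≤ P (i+1) ∧ ∀ j ∈ J, ¬(A j ≤ x ∧ x ≤ A j + C j)) := by
        intro i h1 h2 hb
        exact Nat.find_min hex h2 ⟨⟨h1, by omega⟩, Or.inr hb⟩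
      set J₁ := J.filter (fun j => ∃ x, P s ≤ x ∧ x ≤ R g₀ ∧ A j ≤ x ∧ x ≤ A j + C j) with hJ₁
      have covReg : ∀ x, P s ≤ x → x ≤ R g₀ → ∃ j ∈ J₁, A j ≤ x ∧ x ≤ A j + C j := by
        intro x hx1 hx2
        obtain ⟨d, hdle, hdP, hdmax⟩ : ∃ d, d ≤ g₀ - s ∧ P (s + d) ≤ x ∧
            (d + 1 ≤ g₀ - s → ¬ P (s + d + 1) ≤ x) := by
          refine ⟨Nat.findGreatest (fun d => P (s + d) ≤ x) (g₀ - s), Nat.findGreatest_le _,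
            Nat.findGreatest_spec (P := fun d => P (s + d) ≤ x) (Nat.zero_le _) (by simpa using hx1), fun h1 h2 => ?_⟩
          exact Nat.findGreatest_is_greatest (Nat.lt_succ_self _) h1 h2
        rcases le_or_gt x (R (s + d)) with hcase | hcase
        · obtain ⟨j, hjJ, hjx⟩ := hcov (s + d) (by omega) (by omega) x hdP hcase
          exact ⟨j, Finset.mem_filter.2 ⟨hjJ, ⟨x, hx1, hx2, hjx⟩⟩, hjx⟩
        · have hig' : s + d < g₀ := by
            rcases Nat.eq_or_lt_of_le (show s + d ≤ g₀ by omega) with h | h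
            · exfalso; rw [h] at hcase; linarith
            · exact h
          have hnx : x ≤ P (s + d + 1) := by
            by_contra h
            push_neg at h
            exact hdmax (by omega) h.le
          have hnb := hmin (s + d) (by omega) hig'
          push_neg at hnb
          obtain ⟨j, hjJ, hjx⟩ := hnb x hcase.le hnx
          refine ⟨j, Finset.mem_filter.2 ⟨hjJ, ⟨x, hx1, hx2, hjx⟩⟩, hjx⟩
      have hPsRg : P s ≤ R g₀ := le_trans (hPR s (by omega)) (mono s g₀ hsg (by omega)).2
      have hJ₁ne : J₁.Nonempty := by
        obtain ⟨j, hj, _⟩ := covReg (P s) le_rfl hPsRg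
        exact ⟨j, hj⟩
      have hlen : R g₀ - P s ≤ J₁.card * ℓ := by
        have h1 : Set.Icc (P s) (R g₀) ⊆ ⋃ j ∈ J₁, Set.Icc (A j) (A j + C j) := by
          intro x hx
          obtain ⟨j, hj, hx1, hx2⟩ := covReg x hx.1 hx.2
          exact Set.mem_iUnion₂.2 ⟨j, hj, hx1, hx2⟩
        have h2 := len_le_sum' (P s) (R g₀) J₁ A (fun j => A j + C j) h1
        have h3 : ∀ j ∈ J₁, max (A j + C j - A j) 0 = C j := by
          intro j _; rw [show A j + C j - A j = C j by ring, max_eq_left (hC j).1]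
        rw [Finset.sum_congr rfl h3] at h2
        calc R g₀ - P s ≤ ∑ j ∈ J₁, C j := h2
          _ ≤ ∑ _j ∈ J₁, ℓ := Finset.sum_le_sum (fun j _ => (hC j).2)
          _ = J₁.card * ℓ := by rw [Finset.sum_const, nsmul_eq_mul]
      have hrec : ∀ i, g₀ + 1 ≤ i → i < q → ∀ x, P i ≤ x → x ≤ R i →
          ∃ j ∈ J \ J₁, A j ≤ x ∧ x ≤ A j + C j := by
        intro i h1 h2 x hx1 hx2
        obtain ⟨j, hjJ, hjx⟩ := hcov i (by omega) h2 x hx1 hx2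
        refine ⟨j, Finset.mem_sdiff.2 ⟨hjJ, fun hj₁ => ?_⟩, hjx⟩
        obtain ⟨_, y, hy1, hy2, hy3, hy4⟩ := Finset.mem_filter.1 hj₁
        have hbr : ∃ x₀, R g₀ ≤ x₀ ∧ x₀ ≤ P (g₀+1) ∧ ∀ j ∈ J, ¬(A j ≤ x₀ ∧ x₀ ≤ A j + C j) := by
          rcases hgalt with h | h
          · omega
          · exact h
        obtain ⟨x₀, hx₀1, hx₀2, hx₀3⟩ := hbr
        apply hx₀3 j hjJ
        have hP1 : P (g₀ + 1) ≤ P i := (mono (g₀+1) i h1 h2).1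
        exact ⟨by linarith [hjx.1], by linarith [hjx.2]⟩
      obtain ⟨L', hB', hprop', hsum'⟩ := ih (g₀ + 1) (J \ J₁) (by omega) (by omega) hrec
      refine ⟨(s, g₀, J₁.card) :: L', Blocks.cons hsg hgq hB', ?_, ?_⟩
      · intro b hb
        rcases List.mem_cons.1 hb with h | h
        · subst h
          exact ⟨hJ₁ne.card_pos, hlen⟩
        · exact hprop' b h
      · simp only [List.map_cons, List.sum_cons]
        have hcard : (J \ J₁).card = J.card - J₁.card :=
          Finset.card_sdiff_of_subset (Finset.filter_subset _ _)
        have hle : J₁.card ≤ J.card := Finset.card_filter_le _ _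
        omega

theorem list_exists_max {α : Type*} (L : List α) (hL : L ≠ []) (f : α → ℝ) :
    ∃ b ∈ L, ∀ b' ∈ L, f b' ≤ f b := by
  induction L with
  | nil => exact absurd rfl hL
  | cons a L ih =>
    rcases L.eq_nil_or_concat with h | h
    · subst h
      exact ⟨a, List.mem_cons_self, by intro b' hb'; simp at hb'; subst hb'; exact le_rfl⟩
    · have hL' : L ≠ [] := by rcases h with ⟨_, _, rfl⟩; simp
      obtain ⟨b, hb, hmax⟩ := ih hL'
      rcases le_total (f a) (f b) with hab | hab
      · refine ⟨b, List.mem_cons_of_mem _ hb, fun b' hb' => ?_⟩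
        rcases List.mem_cons.1 hb' with rfl | h'
        · exact hab
        · exact hmax b' h'
      · refine ⟨a, List.mem_cons_self, fun b' hb' => ?_⟩
        rcases List.mem_cons.1 hb' with rfl | h'
        · exact le_rfl
        · exact (hmax b' h').trans hab

noncomputable def blockArcs (P R : ℕ → ℝ) : List (ℕ × ℕ × ℕ) → List (ℝ × ℝ)
  | [] => []
  | (s, e, t) :: L =>
      ((List.range t).map fun r : ℕ => (P s + (r : ℝ) * ((R e - P s)/t), (R e - P s)/t)) ++ blockArcs P R L

theorem blockArcs_cons (P R : ℕ → ℝ) (s e t : ℕ) (L : List (ℕ × ℕ × ℕ)) :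
    blockArcs P R ((s, e, t) :: L) =
      ((List.range t).map fun r : ℕ => (P s + (r : ℝ) * ((R e - P s)/t), (R e - P s)/t)) ++ blockArcs P R L := rfl

theorem blockArcs_length (P R : ℕ → ℝ) (L : List (ℕ × ℕ × ℕ)) :
    (blockArcs P R L).length = (L.map (fun b => b.2.2)).sum := by
  induction L with
  | nil => simp [blockArcs]
  | cons b L ih =>
    obtain ⟨s, e, t⟩ := b
    rw [blockArcs_cons, List.length_append, List.length_map, List.length_range, List.map_cons,
      List.sum_cons, ih]

theorem blockArcs_mem (P R : ℕ → ℝ) (L : List (ℕ × ℕ × ℕ)) (pr : ℝ × ℝ)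
    (h : pr ∈ blockArcs P R L) : ∃ b ∈ L, pr.2 = (R b.2.1 - P b.1)/b.2.2 := by
  induction L with
  | nil => simp [blockArcs] at h
  | cons b L ih =>
    obtain ⟨s, e, t⟩ := b
    rcases List.mem_append.1 h with h' | h'
    · obtain ⟨r, _, hr⟩ := List.mem_map.1 h'
      exact ⟨(s, e, t), List.mem_cons_self, by rw [← hr]⟩
    · obtain ⟨b', hb', h2⟩ := ih h'
      exact ⟨b', List.mem_cons_of_mem _ hb', h2⟩

theorem blockArcs_cover (q : ℕ) (P R : ℕ → ℝ)
    (hPR : ∀ i < q, P i ≤ R i) (hch : ∀ i, i + 1 < q → R i ≤ P (i + 1))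
    (L : List (ℕ × ℕ × ℕ)) (s : ℕ) (hB : Blocks q s L)
    (hprop : ∀ b ∈ L, 1 ≤ b.2.2) :
    ∀ i, s ≤ i → i < q → ∀ x, P i ≤ x → x ≤ R i →
      ∃ pr ∈ blockArcs P R L, pr.1 ≤ x ∧ x ≤ pr.1 + pr.2 := by
  induction hB with
  | nil => intro i h1 h2; omega
  | @cons s e t L' hse heq hB' ih =>
    intro i h1 h2 x hx1 hx2
    rcases le_or_gt i e with hie | hie
    · have hx1' : P s ≤ x := le_trans (chain_mono' q P R hPR hch s i h1 h2).1 hx1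
      have hx2' : x ≤ R e := le_trans hx2 (chain_mono' q P R hPR hch i e hie heq).2
      have ht : 0 < t := hprop (s, e, t) (List.mem_cons_self)
      obtain ⟨r, hr, hr1, hr2⟩ := subdiv_cover (P s) (R e) t ht x hx1' hx2'
      refine ⟨(P s + r * ((R e - P s)/t), (R e - P s)/t), ?_, by simpa using hr1, ?_⟩
      · rw [blockArcs_cons]
        exact List.mem_append.2 (Or.inl (List.mem_map.2 ⟨r, List.mem_range.2 hr, rfl⟩))
      · simpa [add_assoc, add_one_mul] using hr2
    · obtain ⟨pr, hpr, h⟩ := ih (fun b hb => hprop b (List.mem_cons_of_mem _ hb)) i (by omega) h2 x hx1 hx2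
      rw [blockArcs_cons]
      exact ⟨pr, List.mem_append.2 (Or.inr hpr), h⟩

theorem blocks_bounds (q : ℕ) (L : List (ℕ × ℕ × ℕ)) (s : ℕ) (hB : Blocks q s L) :
    ∀ b ∈ L, s ≤ b.1 ∧ b.1 ≤ b.2.1 ∧ b.2.1 < q := by
  induction hB with
  | nil => simp
  | @cons s e t L' hse heq hB' ih =>
    intro b hb
    rcases List.mem_cons.1 hb with rfl | h
    · exact ⟨le_rfl, hse, heq⟩
    · have := ih b h
      exact ⟨by omega, this.2.1, this.2.2⟩

theorem blocks_ne_nil (q : ℕ) (hq : 0 < q) (L : List (ℕ × ℕ × ℕ)) (hB : Blocks q 0 L) :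
    L ≠ [] := by
  intro h; subst h; cases hB; omega

theorem lin_round (hn : 0 < n) (ℓ : ℝ) (q : ℕ) (hq : 0 < q) (P R : ℕ → ℝ)
    (hPR : ∀ i < q, P i ≤ R i) (hch : ∀ i, i + 1 < q → R i ≤ P (i + 1))
    (A C : Fin n → ℝ) (hC : ∀ j, 0 ≤ C j ∧ C j ≤ ℓ)
    (hcov : ∀ i, i < q → ∀ x, P i ≤ x → x ≤ R i → ∃ j, A j ≤ x ∧ x ≤ A j + C j) :
    ∃ i i' t, i ≤ i' ∧ i' < q ∧ 1 ≤ t ∧ t ≤ n ∧ R i' - P i ≤ t * ℓ ∧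
      ∃ a' c' : Fin n → ℝ,
        (∀ j, 0 ≤ c' j ∧ c' j ≤ (R i' - P i)/t) ∧
        (∀ i₀, i₀ < q → ∀ x, P i₀ ≤ x → x ≤ R i₀ → ∃ j, a' j ≤ x ∧ x ≤ a' j + c' j) := by
  classical
  obtain ⟨L, hB, hprop, hsum⟩ := core ℓ q P R hPR hch A C hC q 0 Finset.univ (by omega) (by omega)
    (fun i h1 h2 x hx1 hx2 => by
      obtain ⟨j, hj⟩ := hcov i h2 x hx1 hx2
      exact ⟨j, Finset.mem_univ j, hj⟩)
  rw [Finset.card_univ, Fintype.card_fin] at hsum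
  obtain ⟨b, hbL, hbmax⟩ := list_exists_max L (blocks_ne_nil q hq L hB)
    (fun b => (R b.2.1 - P b.1)/b.2.2)
  obtain ⟨i, i', t⟩ := b
  simp only at hbmax
  obtain ⟨ht1, hlenb⟩ := hprop _ hbL
  simp only at ht1 hlenb
  obtain ⟨-, hii', hi'q⟩ := blocks_bounds q L 0 hB _ hbL
  simp only at hii' hi'q
  have htn : t ≤ n := by
    have h1 : t ∈ L.map (fun b => b.2.2) := List.mem_map.2 ⟨(i, i', t), hbL, rfl⟩
    exact le_trans (List.single_le_sum (fun x _ => Nat.zero_le x) _ h1) hsum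
  have htR : (0:ℝ) < t := by exact_mod_cast ht1
  have hnum : 0 ≤ R i' - P i := by
    have := (chain_mono' q P R hPR hch i i' hii' hi'q).1
    have h2 := hPR i' hi'q
    linarith [hPR i (lt_of_le_of_lt hii' hi'q), (chain_mono' q P R hPR hch i i' hii' hi'q).1]
  have hlpos : 0 ≤ (R i' - P i)/t := div_nonneg hnum htR.le
  set flat := blockArcs P R L with hflat
  have hflen : flat.length ≤ n := by rw [hflat, blockArcs_length]; exact hsum
  refine ⟨i, i', t, hii', hi'q, ht1, htn, hlenb, fun j => (flat.getD j.1 (P 0, 0)).1,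
    fun j => (flat.getD j.1 (P 0, 0)).2, fun j => ?_, fun i₀ h2 x hx1 hx2 => ?_⟩
  · dsimp only
    rcases lt_or_ge j.1 flat.length with hj | hj
    · rw [List.getD_eq_getElem _ _ hj]
      obtain ⟨b', hb'L, hb'eq⟩ := blockArcs_mem P R L _ (List.getElem_mem hj)
      rw [hb'eq]
      obtain ⟨ht1', _⟩ := hprop _ hb'L
      obtain ⟨-, hii'', hi'q'⟩ := blocks_bounds q L 0 hB _ hb'L
      have htR' : (0:ℝ) < b'.2.2 := by exact_mod_cast ht1'
      constructor
      · apply div_nonneg _ htR'.le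
        linarith [(chain_mono' q P R hPR hch b'.1 b'.2.1 hii'' hi'q').1,
          hPR b'.2.1 hi'q']
      · exact hbmax b' hb'L
    · rw [List.getD_eq_default _ _ hj]
      exact ⟨le_rfl, hlpos⟩
  · obtain ⟨pr, hpr, hx⟩ := blockArcs_cover q P R hPR hch L 0 hB
      (fun b hb => (hprop b hb).1) i₀ (Nat.zero_le _) h2 x hx1 hx2
    obtain ⟨k, hk, hkeq⟩ := List.mem_iff_getElem.1 hpr
    refine ⟨⟨k, lt_of_lt_of_le hk hflen⟩, ?_⟩
    dsimp only
    simp only [hflat, List.getD_eq_getElem _ _ hk, hkeq]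
    exact hx

noncomputable def clen (T : ℝ) (U V : ℕ → ℝ) (k k' : ℕ) : ℝ :=
  if U k ≤ V k' then V k' - U k else T - (U k - V k')

def RFeas (T : ℝ) (n q : ℕ) (U V : ℕ → ℝ) (ℓ : ℝ) : Prop :=
  ∃ a c : Fin n → ℝ, (∀ j, 0 ≤ c j ∧ c j ≤ ℓ) ∧
    ∀ k, k < q → ∀ x, U k ≤ x → x ≤ V k →
      ∃ j, ∃ m : ℤ, a j ≤ x + m*T ∧ x + m*T ≤ a j + c j

theorem easy_feas (T : ℝ) (q n : ℕ) (hq : 0 < q) (hn : 0 < n) (U V : ℕ → ℝ)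
    (hPR : ∀ i < q, U i ≤ V i) (hch : ∀ i, i + 1 < q → V i ≤ U (i + 1))
    (t : ℕ) (ht : 1 ≤ t) (htn : t ≤ n) :
    RFeas T n q U V ((V (q-1) - U 0)/t) := by
  set δ := (V (q-1) - U 0)/t with hδ
  have hq1 : q - 1 < q := by omega
  have hnum : 0 ≤ V (q-1) - U 0 := by
    have := (chain_mono' q U V hPR hch 0 (q-1) (by omega) hq1).1
    linarith [hPR (q-1) hq1]
  have hδ0 : 0 ≤ δ := div_nonneg hnum (by positivity)
  refine ⟨fun j => U 0 + (min j.1 (t-1)) * δ, fun _ => δ, fun j => ⟨hδ0, le_rfl⟩, ?_⟩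
  intro k hk x hx1 hx2
  have hx1' : U 0 ≤ x := le_trans (chain_mono' q U V hPR hch 0 k (by omega) hk).1 hx1
  have hx2' : x ≤ V (q-1) := le_trans hx2 (chain_mono' q U V hPR hch k (q-1) (by omega) hq1).2
  obtain ⟨r, hr, hr1, hr2⟩ := subdiv_cover (U 0) (V (q-1)) t ht x hx1' hx2'
  refine ⟨⟨r, lt_of_lt_of_le hr htn⟩, 0, ?_, ?_⟩
  · have : min r (t-1) = r := by omega
    simpa [this] using hr1
  · have h1 : min r (t-1) = r := by omega
    have : U 0 + (r:ℝ) * δ + δ = U 0 + ((r:ℝ)+1) * δ := by ring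
    simp only [h1]
    push_cast
    rw [show x + 0*T = x by ring]
    nlinarith [hr2]

theorem circle_full (T ℓ : ℝ) (hT : 0 < T) {n : ℕ} (a c : Fin n → ℝ)
    (hc : ∀ j, 0 ≤ c j ∧ c j < T)
    (hfull : ∀ x : ℝ, ∃ j, ∃ m : ℤ, a j ≤ x + m*T ∧ x + m*T ≤ a j + c j) :
    T ≤ ∑ j, c j := by
  classical
  set b : Fin n → ℝ := fun j => a j - T * ⌊a j / T⌋ with hb
  have hbmem : ∀ j, 0 ≤ b j ∧ b j < T := by
    intro j
    have h1 := Int.fract_nonneg (a j / T)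
    have h2 := Int.fract_lt_one (a j / T)
    have h3 : b j = T * Int.fract (a j / T) := by
      rw [hb]; simp only [Int.fract]; field_simp
    constructor
    · rw [h3]; positivity
    · rw [h3]; nlinarith
  have hbc : ∀ x : ℝ, ∃ j, ∃ m : ℤ, b j ≤ x + m*T ∧ x + m*T ≤ b j + c j := by
    intro x
    obtain ⟨j, m, h1, h2⟩ := hfull x
    refine ⟨j, m - ⌊a j / T⌋, ?_, ?_⟩
    · push_cast; rw [hb]; dsimp only; nlinarith [h1]
    · push_cast; rw [hb]; dsimp only; nlinarith [h2]
  -- cover [0, T] by clamped interval families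
  set A' : Fin n × Fin 3 → ℝ := fun p =>
    if p.2 = 0 then b p.1 else if p.2 = 1 then 0 else T with hA'
  set B' : Fin n × Fin 3 → ℝ := fun p =>
    if p.2 = 0 then min (b p.1 + c p.1) T else if p.2 = 1 then b p.1 + c p.1 - T else T with hB'
  have hsub : Icc (0:ℝ) T ⊆ ⋃ p ∈ (Finset.univ : Finset (Fin n × Fin 3)), Icc (A' p) (B' p) := by
    intro x hx
    obtain ⟨hx0, hxT⟩ := hx
    obtain ⟨j, m, h1, h2⟩ := hbc x
    obtain ⟨hb0, hbT⟩ := hbmem j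
    obtain ⟨hc0, hcT⟩ := hc j
    have hm : m = 0 ∨ m = 1 ∨ m = -1 := by
      have l1 : (0:ℝ) ≤ x + m*T := le_trans hb0 h1
      have l2 : x + m*T < 2*T := by nlinarith
      have l3 : (m:ℝ)*T ≥ -T := by nlinarith
      have l4 : (m:ℝ)*T < 2*T := by nlinarith
      have l5 : (-1:ℝ) ≤ (m:ℝ) := by nlinarith
      have l6 : (m:ℝ) < 2 := by nlinarith
      have l5' : (-1:ℤ) ≤ m := by exact_mod_cast l5
      have l6' : m < 2 := by exact_mod_cast l6
      omega
    apply mem_iUnion₂.2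
    rcases hm with rfl | rfl | rfl
    · refine ⟨(j, 0), Finset.mem_univ _, ?_⟩
      simp only [hA', hB', if_pos rfl]
      constructor
      · push_cast at h1; linarith
      · push_cast at h2; exact le_min (by linarith) hxT
    · refine ⟨(j, 1), Finset.mem_univ _, ?_⟩
      have : ((1:ℤ):ℝ) = 1 := by norm_num
      simp only [hA', hB']
      norm_num
      push_cast at h1 h2
      constructor
      · exact hx0
      · linarith
    · refine ⟨(j, 2), Finset.mem_univ _, ?_⟩
      push_cast at h1 h2
      have hxeq : x = T := by nlinarith
      simp only [hA', hB']
      norm_num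
      constructor <;> simp [hxeq]
  have hlen := len_le_sum' 0 T Finset.univ A' B' hsub
  rw [sub_zero] at hlen
  have hsum : ∑ p : Fin n × Fin 3, max (B' p - A' p) 0 ≤ ∑ j, c j := by
    rw [Fintype.sum_prod_type]
    apply Finset.sum_le_sum
    intro j _
    rw [Fin.sum_univ_three]
    obtain ⟨hb0, hbT⟩ := hbmem j
    obtain ⟨hc0, hcT⟩ := hc j
    have eA0 : A' (j,(0:Fin 3)) = b j := by rw [hA']; dsimp only; rw [if_pos rfl]
    have eB0 : B' (j,(0:Fin 3)) = min (b j + c j) T := by rw [hB']; dsimp only; rw [if_pos rfl]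
    have eA1 : A' (j,(1:Fin 3)) = 0 := by rw [hA']; dsimp only; rw [if_neg (by decide), if_pos rfl]
    have eB1 : B' (j,(1:Fin 3)) = b j + c j - T := by
      rw [hB']; dsimp only; rw [if_neg (by decide), if_pos rfl]
    have eA2 : A' (j,(2:Fin 3)) = T := by
      rw [hA']; dsimp only; rw [if_neg (by decide), if_neg (by decide)]
    have eB2 : B' (j,(2:Fin 3)) = T := by
      rw [hB']; dsimp only; rw [if_neg (by decide), if_neg (by decide)]
    rw [eA0, eB0, eA1, eB1, eA2, eB2, sub_self, sub_zero, max_self]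
    rcases le_total (b j + c j) T with h | h
    · rw [min_eq_left h, show b j + c j - b j = c j by ring, max_eq_left hc0,
        max_eq_right (by linarith)]
      linarith
    · rw [min_eq_right h, max_eq_left (by linarith), max_eq_left (by linarith)]
      linarith
  linarith

set_option maxHeartbeats 1000000 in
theorem round_real (T ℓ : ℝ) (q n : ℕ) (hq : 0 < q) (hn : 0 < n)
    (U V : ℕ → ℝ) (hUV : ∀ k < q, U k ≤ V k) (hsep : ∀ k, k + 1 < q → V k ≤ U (k+1))
    (h0 : 0 ≤ U 0) (hT : V (q-1) ≤ T)
    (hl : RFeas T n q U V ℓ) :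
    ∃ k k' t, k < q ∧ k' < q ∧ 1 ≤ t ∧ t ≤ n ∧
      clen T U V k k' / t ≤ ℓ ∧ RFeas T n q U V (clen T U V k k' / t) := by
  classical
  obtain ⟨a, c, hc, hcov⟩ := hl
  have hq1 : q - 1 < q := by omega
  have mono := chain_mono' q U V hUV hsep
  have hl0 : 0 ≤ ℓ := le_trans (hc ⟨0, hn⟩).1 (hc ⟨0, hn⟩).2
  have hU0Vq : U 0 ≤ V (q-1) := le_trans (hUV 0 hq) (mono 0 (q-1) (by omega) hq1).2
  have hclen0 : clen T U V 0 (q-1) = V (q-1) - U 0 := by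
    rw [clen, if_pos hU0Vq]
  have hwin : V (q-1) - U 0 ≤ T := by linarith
  rcases le_or_gt (V (q-1) - U 0) ℓ with hE | hE
  · refine ⟨0, q-1, 1, hq, hq1, le_rfl, hn, ?_, ?_⟩
    · rw [hclen0, Nat.cast_one, div_one]; exact hE
    · rw [hclen0]; exact easy_feas T q n hq hn U V hUV hsep 1 le_rfl hn
  · have hTpos : 0 < T := by linarith
    have hcT : ∀ j, c j < T := fun j => lt_of_le_of_lt (hc j).2 (by linarith)
    set UC : ℝ → Prop := fun x => ∃ j, ∃ m : ℤ, a j ≤ x + m*T ∧ x + m*T ≤ a j + c j with hUC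
    by_cases hfull : ∀ x : ℝ, UC x
    · have hsum := circle_full T ℓ hTpos a c (fun j => ⟨(hc j).1, hcT j⟩) hfull
      have hsc : ∑ j, c j ≤ (n:ℝ) * ℓ := by
        calc ∑ j, c j ≤ ∑ _j : Fin n, ℓ := Finset.sum_le_sum (fun j _ => (hc j).2)
          _ = n * ℓ := by rw [Finset.sum_const, Finset.card_univ, Fintype.card_fin, nsmul_eq_mul]
      refine ⟨0, q-1, n, hq, hq1, hn, le_rfl, ?_, ?_⟩
      · rw [hclen0, div_le_iff₀ (by positivity)]
        nlinarith
      · rw [hclen0]; exact easy_feas T q n hq hn U V hUV hsep n hn le_rfl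
    · push_neg at hfull
      obtain ⟨ξ, hξ⟩ := hfull
      have hUCshift : ∀ (x : ℝ) (s : ℤ), UC x → UC (x + s*T) := by
        rintro x s ⟨j, m, h1, h2⟩
        refine ⟨j, m - s, ?_, ?_⟩
        · have heq : x + (s:ℝ)*T + ((m - s : ℤ):ℝ)*T = x + (m:ℝ)*T := by push_cast; ring
          rw [heq]; exact h1
        · have heq : x + (s:ℝ)*T + ((m - s : ℤ):ℝ)*T = x + (m:ℝ)*T := by push_cast; ring
          rw [heq]; exact h2
      set s₀ : ℤ := ⌊(ξ - U 0)/T⌋ with hs₀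
      set ξ₀ : ℝ := ξ - s₀ * T with hξ₀def
      have hξ₀ : ¬ UC ξ₀ := by
        intro h
        exact hξ (by simpa [hξ₀def, sub_add_cancel] using hUCshift ξ₀ s₀ h)
      have hfl := Int.floor_le ((ξ - U 0)/T)
      have hfl2 := Int.lt_floor_add_one ((ξ - U 0)/T)
      have hξ₀ge : U 0 ≤ ξ₀ := by
        rw [hξ₀def]
        have : (s₀:ℝ) * T ≤ ξ - U 0 := by
          rw [hs₀]
          calc (⌊(ξ - U 0)/T⌋ : ℝ) * T ≤ ((ξ - U 0)/T) * T := by nlinarith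
            _ = ξ - U 0 := by field_simp
        linarith
      have hξ₀lt : ξ₀ < U 0 + T := by
        rw [hξ₀def]
        have : ξ - U 0 < ((s₀:ℝ) + 1) * T := by
          rw [hs₀]
          calc ξ - U 0 = ((ξ - U 0)/T) * T := by field_simp
            _ < _ := by nlinarith
        nlinarith
      have hU0cov : UC (U 0) := hcov 0 hq (U 0) le_rfl (hUV 0 hq)
      have hξ₀gt : U 0 < ξ₀ := by
        rcases eq_or_lt_of_le hξ₀ge with h | h
        · exact absurd (h ▸ hU0cov) hξ₀
        · exact h
      have hξ₀pos : 0 < ξ₀ := lt_of_le_of_lt h0 hξ₀gt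
      -- locate the break gap
      obtain ⟨ks, hksq, hksV, hksU⟩ :
          ∃ ks, ks < q ∧ V ks < ξ₀ ∧ (ks + 1 < q → ξ₀ < U (ks+1)) := by
        rcases lt_or_ge (V (q-1)) ξ₀ with h | h
        · exact ⟨q-1, hq1, h, fun hk => by omega⟩
        · have hexk : ∃ k, ξ₀ ≤ V k := ⟨q-1, h⟩
          set k₁ := Nat.find hexk with hk₁def
          have hk₁ : ξ₀ ≤ V k₁ := Nat.find_spec hexk
          have hk₁q : k₁ < q := by
            have : k₁ ≤ q - 1 := Nat.find_le h
            omega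
          have hk₁U : ξ₀ < U k₁ := by
            by_contra hcon
            push_neg at hcon
            exact hξ₀ (hcov k₁ hk₁q ξ₀ hcon hk₁)
          have hk₁0 : k₁ ≠ 0 := by
            intro h'
            rw [h'] at hk₁U
            linarith
          have hlast : ¬ (ξ₀ ≤ V (k₁ - 1)) := Nat.find_min hexk (by omega)
          push_neg at hlast
          refine ⟨k₁ - 1, by omega, hlast, fun _ => ?_⟩
          have : k₁ - 1 + 1 = k₁ := by omega
          rw [this]
          exact hk₁U
      set d := q - 1 - ks with hd
      set P : ℕ → ℝ := fun i => if i < d then U (ks+1+i) else U (i - d) + T with hP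
      set R : ℕ → ℝ := fun i => if i < d then V (ks+1+i) else V (i - d) + T with hR
      have hPRq : ∀ i < q, P i ≤ R i := by
        intro i hi
        rw [hP, hR]; dsimp only
        split
        · exact hUV _ (by omega)
        · have : i - d < q := by omega
          linarith [hUV (i - d) (by omega)]
      have hchPR : ∀ i, i + 1 < q → R i ≤ P (i+1) := by
        intro i hi
        rw [hP, hR]; dsimp only
        rcases lt_or_ge (i+1) d with h1 | h1
        · rw [if_pos (by omega), if_pos h1]
          have : ks + 1 + i + 1 = ks + 1 + (i+1) := by omega
          have h2 := hsep (ks+1+i) (by omega)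
          rw [this] at h2
          exact h2
        · rcases lt_or_ge i d with h2 | h2
          · have hid : i + 1 = d := by omega
            rw [if_pos h2, if_neg (by omega)]
            have e1 : ks + 1 + i = q - 1 := by omega
            have e2 : i + 1 - d = 0 := by omega
            rw [e1, e2]
            linarith
          · rw [if_neg (by omega), if_neg (by omega)]
            have e : i + 1 - d = (i - d) + 1 := by omega
            rw [e]
            have := hsep (i-d) (by omega)
            linarith
      have hwinP : ∀ i < q, ξ₀ < P i ∧ R i < ξ₀ + T := by
        intro i hi
        rw [hP, hR]; dsimp only
        rcases lt_or_ge i d with h1 | h1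
        · rw [if_pos h1, if_pos h1]
          constructor
          · calc ξ₀ < U (ks+1) := hksU (by omega)
              _ ≤ U (ks+1+i) := (mono (ks+1) (ks+1+i) (by omega) (by omega)).1
          · calc V (ks+1+i) ≤ V (q-1) := (mono (ks+1+i) (q-1) (by omega) hq1).2
              _ ≤ T := hT
              _ < ξ₀ + T := by linarith
        · rw [if_neg (by omega), if_neg (by omega)]
          constructor
          · calc ξ₀ < U 0 + T := hξ₀lt
              _ ≤ U (i-d) + T := by linarith [(mono 0 (i-d) (by omega) (by omega)).1]
          · have : V (i-d) ≤ V ks := (mono (i-d) ks (by omega) hksq).2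
            linarith
      set mj : Fin n → ℤ := fun j => ⌊(a j - ξ₀)/T⌋ with hmj
      set a' : Fin n → ℝ := fun j => a j - mj j * T with ha'
      have hflj : ∀ j : Fin n, ξ₀ ≤ a' j ∧ a' j < ξ₀ + T := by
        intro j
        have f1 := Int.floor_le ((a j - ξ₀)/T)
        have f2 := Int.lt_floor_add_one ((a j - ξ₀)/T)
        have e : ((a j - ξ₀)/T) * T = a j - ξ₀ := by field_simp
        rw [ha', hmj]; dsimp only
        constructor
        · nlinarith
        · nlinarith
      have ha'1 : ∀ j, ξ₀ < a' j := by
        intro j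
        rcases eq_or_lt_of_le (hflj j).1 with h | h
        · exfalso
          apply hξ₀
          refine ⟨j, mj j, ?_, ?_⟩
          · rw [ha'] at h; dsimp only at h; linarith
          · rw [ha'] at h; dsimp only at h; linarith [(hc j).1]
        · exact h
      have ha'2 : ∀ j, a' j + c j < ξ₀ + T := by
        intro j
        by_contra hcon
        push_neg at hcon
        apply hξ₀
        refine ⟨j, mj j + 1, ?_, ?_⟩
        · have w := (hflj j).2
          rw [ha'] at w; dsimp only at w
          push_cast
          linarith
        · have hc2 := hcon
          rw [ha'] at hc2; dsimp only at hc2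
          push_cast
          linarith
      have hlincov : ∀ i, i < q → ∀ x, P i ≤ x → x ≤ R i →
          ∃ j, a' j ≤ x ∧ x ≤ a' j + c j := by
        intro i hi x hx1 hx2
        have hxw : ξ₀ < x ∧ x < ξ₀ + T :=
          ⟨lt_of_lt_of_le (hwinP i hi).1 hx1, lt_of_le_of_lt hx2 (hwinP i hi).2⟩
        have hUCx : ∃ j, ∃ m : ℤ, a j ≤ x + m*T ∧ x + m*T ≤ a j + c j := by
          rcases lt_or_ge i d with h1 | h1
          · have hPi : P i = U (ks+1+i) := by rw [hP]; dsimp only; rw [if_pos h1]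
            have hRi : R i = V (ks+1+i) := by rw [hR]; dsimp only; rw [if_pos h1]
            exact hcov (ks+1+i) (by omega) x (hPi ▸ hx1) (hRi ▸ hx2)
          · have hPi : P i = U (i-d) + T := by rw [hP]; dsimp only; rw [if_neg (by omega)]
            have hRi : R i = V (i-d) + T := by rw [hR]; dsimp only; rw [if_neg (by omega)]
            obtain ⟨j, m, hm1, hm2⟩ := hcov (i-d) (by omega) (x - T)
              (by rw [hPi] at hx1; linarith) (by rw [hRi] at hx2; linarith)
            refine ⟨j, m - 1, ?_, ?_⟩
            · have e : x + ((m - 1 : ℤ):ℝ)*T = (x - T) + (m:ℝ)*T := by push_cast; ring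
              rw [e]; exact hm1
            · have e : x + ((m - 1 : ℤ):ℝ)*T = (x - T) + (m:ℝ)*T := by push_cast; ring
              rw [e]; exact hm2
        obtain ⟨j, m, hm1, hm2⟩ := hUCx
        have hs : a' j ≤ x + ((m - mj j : ℤ):ℝ)*T ∧ x + ((m - mj j : ℤ):ℝ)*T ≤ a' j + c j := by
          rw [ha']; dsimp only
          constructor
          · push_cast; linarith
          · push_cast; linarith
        have hz : (m - mj j : ℤ) = 0 := by
          have w1 := (ha'1 j)
          have w2 := (ha'2 j)
          have w3 := hs.1
          have w4 := hs.2
          have h5 : ξ₀ < x + ((m - mj j : ℤ):ℝ)*T := lt_of_lt_of_le w1 w3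
          have h6 : x + ((m - mj j : ℤ):ℝ)*T < ξ₀ + T := lt_of_le_of_lt w4 (by linarith [(hc j).1])
          have h7 : (-1 : ℝ) < ((m - mj j : ℤ):ℝ) := by nlinarith [hxw.1, hxw.2]
          have h8 : ((m - mj j : ℤ):ℝ) < 1 := by nlinarith [hxw.1, hxw.2]
          have h7' : (-1 : ℤ) < m - mj j := by exact_mod_cast h7
          have h8' : m - mj j < 1 := by exact_mod_cast h8
          omega
        rw [hz] at hs
        push_cast at hs
        simp only [zero_mul, add_zero] at hs
        exact ⟨j, hs.1, hs.2⟩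
      obtain ⟨i, i', t, hii', hi'q, ht1, htn, hlenb, a'', c'', hc'', hcov''⟩ :=
        lin_round hn ℓ q hq P R hPRq hchPR a' c hc hlincov
      have htpos : (0:ℝ) < t := by exact_mod_cast ht1
      have hPlow : ∀ i₀, i₀ < d → P i₀ = U (ks+1+i₀) ∧ R i₀ = V (ks+1+i₀) := by
        intro i₀ h
        constructor
        · rw [hP]; dsimp only; rw [if_pos h]
        · rw [hR]; dsimp only; rw [if_pos h]
      have hPhigh : ∀ i₀, d ≤ i₀ → P i₀ = U (i₀-d) + T ∧ R i₀ = V (i₀-d) + T := by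
        intro i₀ h
        constructor
        · rw [hP]; dsimp only; rw [if_neg (by omega)]
        · rw [hR]; dsimp only; rw [if_neg (by omega)]
      -- map back to original indices
      obtain ⟨k, k', hkq, hk'q, hclen⟩ :
          ∃ k k', k < q ∧ k' < q ∧ clen T U V k k' = R i' - P i := by
        rcases lt_or_ge i d with h1 | h1
        · rcases lt_or_ge i' d with h2 | h2
          · refine ⟨ks+1+i, ks+1+i', by omega, by omega, ?_⟩
            rw [(hPlow i h1).1, (hPlow i' h2).2, clen, if_pos]
            exact le_trans (mono _ _ (by omega) (by omega)).1 (hUV _ (by omega))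
          · refine ⟨ks+1+i, i'-d, by omega, by omega, ?_⟩
            rw [(hPlow i h1).1, (hPhigh i' h2).2, clen, if_neg]
            · ring
            · push_neg
              calc V (i'-d) ≤ V ks := (mono _ _ (by omega) hksq).2
                _ < ξ₀ := hksV
                _ < U (ks+1) := hksU (by omega)
                _ ≤ U (ks+1+i) := (mono _ _ (by omega) (by omega)).1
        · have h2 : d ≤ i' := le_trans h1 hii'
          refine ⟨i-d, i'-d, by omega, by omega, ?_⟩
          rw [(hPhigh i h1).1, (hPhigh i' h2).2, clen, if_pos]
          · ring
          · exact le_trans (mono _ _ (by omega) (by omega)).1 (hUV _ (by omega))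
      refine ⟨k, k', t, hkq, hk'q, ht1, htn, ?_, ?_⟩
      · rw [hclen, div_le_iff₀ htpos]
        linarith
      · rw [hclen]
        refine ⟨a'', c'', hc'', ?_⟩
        intro k₀ hk₀ x hx1 hx2
        rcases lt_or_ge ks k₀ with h1 | h1
        · have hi₀ : k₀ - ks - 1 < d := by omega
          obtain ⟨hPi, hRi⟩ := hPlow (k₀ - ks - 1) hi₀
          have he : ks + 1 + (k₀ - ks - 1) = k₀ := by omega
          rw [he] at hPi hRi
          obtain ⟨j, hj1, hj2⟩ := hcov'' (k₀ - ks - 1) (by omega) x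
            (by rw [hPi]; exact hx1) (by rw [hRi]; exact hx2)
          exact ⟨j, 0, by rw [show x + ((0:ℤ):ℝ)*T = x by push_cast; ring]; exact hj1,
            by rw [show x + ((0:ℤ):ℝ)*T = x by push_cast; ring]; exact hj2⟩
        · have hi₀q : k₀ + d < q := by omega
          obtain ⟨hPi, hRi⟩ := hPhigh (k₀ + d) (by omega)
          have he : k₀ + d - d = k₀ := by omega
          rw [he] at hPi hRi
          obtain ⟨j, hj1, hj2⟩ := hcov'' (k₀ + d) hi₀q (x + T)
            (by rw [hPi]; linarith) (by rw [hRi]; linarith)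
          exact ⟨j, 1, by rw [show x + ((1:ℤ):ℝ)*T = x + T by push_cast; ring]; exact hj1,
            by rw [show x + ((1:ℤ):ℝ)*T = x + T by push_cast; ring]; exact hj2⟩

theorem coe_eq_coe (T z y : ℝ) :
    ((z : AddCircle T) = (y : AddCircle T)) ↔ ∃ m : ℤ, z = y + m * T := by
  rw [QuotientAddGroup.eq_iff_sub_mem, AddSubgroup.mem_zmultiples_iff]
  constructor
  · rintro ⟨m, hm⟩
    rw [zsmul_eq_mul] at hm
    exact ⟨m, by linarith⟩
  · rintro ⟨m, hm⟩
    exact ⟨m, by rw [zsmul_eq_mul]; linarith⟩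

theorem feas_iff (T : ℝ) (q n : ℕ) (hq : 0 < q) (u v : Fin q → ℝ) (U V : ℕ → ℝ)
    (hU : ∀ (k : ℕ) (h : k < q), U k = u ⟨k, h⟩)
    (hV : ∀ (k : ℕ) (h : k < q), V k = v ⟨k, h⟩) (ℓ : ℝ) :
    (∃ a c : Fin n → ℝ, (∀ j, 0 ≤ c j ∧ c j ≤ ℓ) ∧
        (⋃ k'', carc T (u k'') (v k'')) ⊆ ⋃ j, carc T (a j) (a j + c j)) ↔
      RFeas T n q U V ℓ := by
  constructor
  · rintro ⟨a, c, hc, hsub⟩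
    refine ⟨a, c, hc, ?_⟩
    intro k hk x hx1 hx2
    rw [hU k hk] at hx1
    rw [hV k hk] at hx2
    have hx : (x : AddCircle T) ∈ ⋃ k'', carc T (u k'') (v k'') :=
      mem_iUnion.2 ⟨⟨k, hk⟩, ⟨x, ⟨hx1, hx2⟩, rfl⟩⟩
    obtain ⟨j, z, hz, hzeq⟩ := mem_iUnion.1 (hsub hx)
    obtain ⟨m, hm⟩ := (coe_eq_coe T z x).1 hzeq
    exact ⟨j, m, by rw [← hm]; exact hz.1, by rw [← hm]; exact hz.2⟩
  · rintro ⟨a, c, hc, hcov⟩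
    refine ⟨a, c, hc, ?_⟩
    intro pt hpt
    obtain ⟨k, x, hx, rfl⟩ := mem_iUnion.1 hpt
    obtain ⟨j, m, h1, h2⟩ := hcov k.1 k.2 x (by rw [hU k.1 k.2]; simpa using hx.1)
      (by rw [hV k.1 k.2]; simpa using hx.2)
    refine mem_iUnion.2 ⟨j, ⟨x + m*T, ⟨h1, h2⟩, ?_⟩⟩
    exact (coe_eq_coe T (x + m*T) x).2 ⟨m, rfl⟩

end OptCandAux

set_option maxHeartbeats 1000000 in
/-- the optimal value `ℓ*` for a single multi-component perimeter
`P = ⋃ k, [u k, v k] ⊊ ∂R` on a circle of circumference `T` lies in the candidate set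
`{ len(S_{k−k'}) / t : 1 ≤ k, k' ≤ q, 1 ≤ t ≤ n }`, where `S_{k−k'}` is the closed
arc from the left endpoint `u k` of `S_k` clockwise to the right endpoint `v k'`
of `S_{k'}` (its length is `v k' − u k`, or `T − (u k − v k')` when wrapping). -/
theorem opt_in_candidate_set (T : ℝ) (q n : ℕ) (hq : 0 < q) (hn : 0 < n)
    (u v : Fin q → ℝ)
    (huv : ∀ k, u k ≤ v k)
    (hsep : ∀ k : Fin q, ∀ h : k.1 + 1 < q, v k ≤ u ⟨k.1 + 1, h⟩)
    (h0 : 0 ≤ u ⟨0, hq⟩)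
    (hT : v ⟨q - 1, Nat.sub_lt hq one_pos⟩ ≤ T)
    (hproper : (⋃ k, carc T (u k) (v k)) ≠ Set.univ)
    (len : Fin q → Fin q → ℝ)
    (hlen : ∀ k k', len k k' = if u k ≤ v k' then v k' - u k else T - (u k - v k')) :
    ∃ (k k' : Fin q) (t : ℕ), 1 ≤ t ∧ t ≤ n ∧
      sInf {ℓ : ℝ | ∃ a c : Fin n → ℝ,
          (∀ j, 0 ≤ c j ∧ c j ≤ ℓ) ∧
          (⋃ k'', carc T (u k'') (v k'')) ⊆ ⋃ j, carc T (a j) (a j + c j)} =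
        len k k' / t := by
  classical
  set U : ℕ → ℝ := fun k => if h : k < q then u ⟨k, h⟩ else 0 with hUdef
  set V : ℕ → ℝ := fun k => if h : k < q then v ⟨k, h⟩ else 0 with hVdef
  have hU : ∀ (k : ℕ) (h : k < q), U k = u ⟨k, h⟩ := fun k h => by rw [hUdef]; simp [h]
  have hV : ∀ (k : ℕ) (h : k < q), V k = v ⟨k, h⟩ := fun k h => by rw [hVdef]; simp [h]
  have hUV' : ∀ k < q, U k ≤ V k := fun k h => by rw [hU k h, hV k h]; exact huv _
  have hsep' : ∀ k, k + 1 < q → V k ≤ U (k+1) := by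
    intro k h
    rw [hV k (by omega), hU (k+1) h]
    exact hsep ⟨k, by omega⟩ h
  have h0' : 0 ≤ U 0 := by rw [hU 0 hq]; exact h0
  have hT' : V (q-1) ≤ T := by rw [hV (q-1) (Nat.sub_lt hq one_pos)]; exact hT
  set S : Set ℝ := {ℓ : ℝ | ∃ a c : Fin n → ℝ,
      (∀ j, 0 ≤ c j ∧ c j ≤ ℓ) ∧
      (⋃ k'', carc T (u k'') (v k'')) ⊆ ⋃ j, carc T (a j) (a j + c j)} with hSdef
  have hSiff : ∀ ℓ, ℓ ∈ S ↔ RFeas T n q U V ℓ := by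
    intro ℓ
    rw [hSdef]
    exact feas_iff T q n hq u v U V hU hV ℓ
  set F : Set ℝ := {x : ℝ | (∃ k k' t, k < q ∧ k' < q ∧ 1 ≤ t ∧ t ≤ n ∧
      x = clen T U V k k' / t) ∧ RFeas T n q U V x} with hFdef
  have mono := chain_mono' q U V hUV' hsep'
  have hq1 : q - 1 < q := Nat.sub_lt hq one_pos
  have hclen0 : clen T U V 0 (q-1) = V (q-1) - U 0 := by
    rw [clen, if_pos (le_trans (hUV' 0 hq) (mono 0 (q-1) (by omega) hq1).2)]
  have hFne : F.Nonempty := by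
    refine ⟨clen T U V 0 (q-1) / (1:ℕ), ⟨0, q-1, 1, hq, hq1, le_rfl, hn, rfl⟩, ?_⟩
    rw [hclen0]
    exact easy_feas T q n hq hn U V hUV' hsep' 1 le_rfl hn
  have hFfin : F.Finite := by
    apply Set.Finite.subset (Set.finite_range
      (fun p : Fin q × Fin q × Fin (n+1) => clen T U V p.1.1 p.2.1.1 / (p.2.2.1 : ℕ)))
    rintro x ⟨⟨k, k', t, hkq, hk'q, ht1, htn, rfl⟩, -⟩
    exact ⟨(⟨k, hkq⟩, ⟨k', hk'q⟩, ⟨t, by omega⟩), rfl⟩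
  obtain ⟨ℓ₀, hℓ₀F, hℓ₀min⟩ := hFfin.exists_minimalFor id F hFne
  have hmin : ∀ x ∈ F, ℓ₀ ≤ x := by
    intro x hx
    by_contra hcon
    push_neg at hcon
    have := hℓ₀min hx hcon.le
    simp only [id] at this
    linarith [this, hcon]
  have hbdd : BddBelow S := by
    refine ⟨0, fun ℓ hℓ => ?_⟩
    obtain ⟨a, c, hc, -⟩ := hℓ
    exact le_trans (hc ⟨0, hn⟩).1 (hc ⟨0, hn⟩).2
  have hSF : F ⊆ S := fun x hx => (hSiff x).2 hx.2
  have hSne : S.Nonempty := ⟨ℓ₀, hSF hℓ₀F⟩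
  have h1 : sInf S ≤ ℓ₀ := csInf_le hbdd (hSF hℓ₀F)
  have h2 : ℓ₀ ≤ sInf S := by
    refine le_csInf hSne (fun ℓ hℓ => ?_)
    obtain ⟨k, k', t, hkq, hk'q, ht1, htn, hle, hfeas⟩ :=
      round_real T ℓ q n hq hn U V hUV' hsep' h0' hT' ((hSiff ℓ).1 hℓ)
    exact le_trans (hmin _ ⟨⟨k, k', t, hkq, hk'q, ht1, htn, rfl⟩, hfeas⟩) hle
  have heq : sInf S = ℓ₀ := le_antisymm h1 h2
  obtain ⟨⟨k, k', t, hkq, hk'q, ht1, htn, hx⟩, -⟩ := hℓ₀F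
  refine ⟨⟨k, hkq⟩, ⟨k', hk'q⟩, t, ht1, htn, ?_⟩
  rw [heq, hx, hlen]
  congr 1
  rw [clen, hU k hkq, hV k' hk'q]
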